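/- Pythagorean identity for KL projection onto lazy maps: let π be a probability density on ℝ^d, ρ the standard Gaussian, U orthogonal, r ≤ d, and define f⋆(y) = E[π(X)/ρ(X) | U_rᵀ X = y] with X ∼ ρ, and let T⋆ ∈ 𝒯_r(U) satisfy T⋆_♯ρ(x) = f⋆(U_rᵀ x) ρ(x). Then for every lazy map T ∈ 𝒯_r(U), D_KL(π ‖ T_♯ρ) = D_KL(π ‖ T⋆_♯ρ) + D_KL(T⋆_♯ρ ‖ T_♯ρ). In particular T⋆ minimizes D_KL(π ‖ T_♯ρ) over T ∈ 𝒯_r(U). -/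

import Mathlib

open MeasureTheory Matrix Filter
open scoped ENNReal

/-- Standard Gaussian density on `ℝ^d`. -/
noncomputable def gaussD (d : ℕ) (x : Fin d → ℝ) : ℝ :=
  (2 * Real.pi) ^ (-(d : ℝ) / 2) * Real.exp (-(∑ i, (x i) ^ 2) / 2)

/-- Standard Gaussian measure on `ℝ^d`. -/
noncomputable def stdGauss (d : ℕ) : Measure (Fin d → ℝ) :=
  volume.withDensity (fun x => ENNReal.ofReal (gaussD d x))

open Classical in
/-- Kullback--Leibler divergence, valued in `ℝ≥0∞`. -/
noncomputable def klDiv {E : Type*} [MeasurableSpace E] (μ ν : Measure E) : ℝ≥0∞ :=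
  if μ ≪ ν ∧ Integrable (fun x => Real.log ((μ.rnDeriv ν x).toReal)) μ
  then ENNReal.ofReal (∫ x, Real.log ((μ.rnDeriv ν x).toReal) ∂μ)
  else ⊤

/-- First `r` columns of a `d×d` matrix. -/
def colsFirst {d : ℕ} (r : ℕ) (hr : r ≤ d) (U : Matrix (Fin d) (Fin d) ℝ) :
    Matrix (Fin d) (Fin r) ℝ :=
  fun i j => U i (Fin.castLE hr j)

/-- Last `d - r` columns of a `d×d` matrix. -/
def colsLast {d : ℕ} (r : ℕ) (hr : r ≤ d) (U : Matrix (Fin d) (Fin d) ℝ) :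
    Matrix (Fin d) (Fin (d - r)) ℝ :=
  fun i j => U i ⟨r + (j : ℕ), by have := j.isLt; omega⟩

/-- A pair of maps forming a (C¹) diffeomorphism of `ℝ^n`. -/
def IsDiffeo {n : ℕ} (τ σ : (Fin n → ℝ) → (Fin n → ℝ)) : Prop :=
  ContDiff ℝ 1 τ ∧ ContDiff ℝ 1 σ ∧ Function.LeftInverse σ τ ∧ Function.RightInverse σ τ

/-- The lazy map `T(z) = U_r τ(z_{1:r}) + U_⊥ z_⊥`. -/
noncomputable def lazyMap {d r : ℕ} (hr : r ≤ d) (U : Matrix (Fin d) (Fin d) ℝ)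
    (τ : (Fin r → ℝ) → (Fin r → ℝ)) (z : Fin d → ℝ) : Fin d → ℝ :=
  (colsFirst r hr U).mulVec (τ (fun j => z (Fin.castLE hr j))) +
  (colsLast r hr U).mulVec (fun j => z ⟨r + (j : ℕ), by have := j.isLt; omega⟩)

/-- Membership in the class `𝒯_r(U)` of lazy maps. -/
def IsLazy {d : ℕ} (r : ℕ) (hr : r ≤ d) (U : Matrix (Fin d) (Fin d) ℝ)
    (T : (Fin d → ℝ) → (Fin d → ℝ)) : Prop :=
  ∃ τ σ, IsDiffeo τ σ ∧ T = lazyMap hr U τ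

/-! ### Auxiliary material -/

section Aux

variable {d r : ℕ}

lemma sum_split (hr : r ≤ d) (F : Fin d → ℝ) :
    ∑ k, F k = (∑ j : Fin r, F (Fin.castLE hr j)) +
      ∑ j : Fin (d - r), F ⟨r + (j : ℕ), by have := j.isLt; omega⟩ := by
  classical
  set e : Fin r ⊕ Fin (d - r) → Fin d :=
    Sum.elim (Fin.castLE hr) (fun j => ⟨r + (j : ℕ), by have := j.isLt; omega⟩) with he
  have hbij : Function.Bijective e := by
    constructor
    · rintro (a | a) (b | b) h <;>
        simp only [he, Sum.elim_inl, Sum.elim_inr] at h <;>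
        have hv := congrArg Fin.val h
    -- inl inl
      · have : (a : ℕ) = b := hv
        exact congrArg Sum.inl (Fin.ext this)
      · exfalso; have ha := a.isLt; simp only [Fin.castLE, Fin.val_mk] at hv; omega
      · exfalso; have hb := b.isLt; simp only [Fin.castLE, Fin.val_mk] at hv; omega
      · have : (a : ℕ) = b := by simpa using hv
        exact congrArg Sum.inr (Fin.ext this)
    · intro k
      by_cases hk : (k : ℕ) < r
      · exact ⟨Sum.inl ⟨k, hk⟩, Fin.ext rfl⟩
      · refine ⟨Sum.inr ⟨(k : ℕ) - r, by have := k.isLt; omega⟩, Fin.ext ?_⟩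
        have := k.isLt
        simp only [he, Sum.elim_inr]
        omega
  calc ∑ k, F k = ∑ s, F (e s) :=
        (Fintype.sum_bijective e hbij (fun s => F (e s)) F (fun s => rfl)).symm
  _ = _ := by rw [Fintype.sum_sum_type]; rfl

/-- Split a vector in `ℝ^d` into its first `r` and last `d-r` coordinates. -/
def splitFun (hr : r ≤ d) (x : Fin d → ℝ) : (Fin r → ℝ) × (Fin (d - r) → ℝ) :=
  (fun j => x (Fin.castLE hr j), fun j => x ⟨r + (j : ℕ), by have := j.isLt; omega⟩)

/-- Glue two blocks into a vector in `ℝ^d`. -/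
def glueFun (hr : r ≤ d) (ab : (Fin r → ℝ) × (Fin (d - r) → ℝ)) (k : Fin d) : ℝ :=
  if h : (k : ℕ) < r then ab.1 ⟨k, h⟩
  else ab.2 ⟨(k : ℕ) - r, by have := k.isLt; omega⟩

lemma glue_split (hr : r ≤ d) (x : Fin d → ℝ) : glueFun hr (splitFun hr x) = x := by
  funext k
  by_cases h : (k : ℕ) < r
  · rw [glueFun, dif_pos h]
    exact congrArg x (Fin.ext rfl)
  · rw [glueFun, dif_neg h]
    refine congrArg x (Fin.ext ?_)
    have := k.isLt
    simp only [Fin.val_mk]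
    omega

lemma split_glue (hr : r ≤ d) (ab : (Fin r → ℝ) × (Fin (d - r) → ℝ)) :
    splitFun hr (glueFun hr ab) = ab := by
  refine Prod.ext ?_ ?_
  · funext j
    have h : ((Fin.castLE hr j : Fin d) : ℕ) < r := j.isLt
    show glueFun hr ab (Fin.castLE hr j) = ab.1 j
    rw [glueFun, dif_pos h]
    exact congrArg ab.1 (Fin.ext rfl)
  · funext j
    have h : ¬ ((⟨r + (j : ℕ), by have := j.isLt; omega⟩ : Fin d) : ℕ) < r := by
      simp only [Fin.val_mk]; omega
    show glueFun hr ab _ = ab.2 j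
    rw [glueFun, dif_neg h]
    refine congrArg ab.2 (Fin.ext ?_)
    simp only [Fin.val_mk]
    omega

/-- The coordinate-splitting linear equivalence. -/
noncomputable def splitL (hr : r ≤ d) : (Fin d → ℝ) ≃ₗ[ℝ] (Fin r → ℝ) × (Fin (d - r) → ℝ) where
  toFun := splitFun hr
  invFun := glueFun hr
  map_add' x y := rfl
  map_smul' c x := rfl
  left_inv := glue_split hr
  right_inv := split_glue hr

lemma lazyMap_eq (hr : r ≤ d) (U : Matrix (Fin d) (Fin d) ℝ)
    (τ : (Fin r → ℝ) → (Fin r → ℝ)) :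
    lazyMap hr U τ =
      fun z => U.mulVec (glueFun hr (τ (splitFun hr z).1, (splitFun hr z).2)) := by
  funext z i
  show (colsFirst r hr U).mulVec _ i + (colsLast r hr U).mulVec _ i = _
  rw [Matrix.mulVec, Matrix.mulVec, Matrix.mulVec, dotProduct, dotProduct, dotProduct]
  rw [sum_split hr (fun k => U i k * glueFun hr (τ (splitFun hr z).1, (splitFun hr z).2) k)]
  congr 1
  · refine Finset.sum_congr rfl fun j _ => ?_
    have h : ((Fin.castLE hr j : Fin d) : ℕ) < r := j.isLt
    rw [glueFun, dif_pos h]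
    rfl
  · refine Finset.sum_congr rfl fun j _ => ?_
    have h : ¬ ((⟨r + (j : ℕ), by have := j.isLt; omega⟩ : Fin d) : ℕ) < r := by
      simp only [Fin.val_mk]; omega
    rw [glueFun, dif_neg h]
    show U i _ * z _ = U i _ * z _
    congr 1
    refine congrArg z (Fin.ext ?_)
    simp only [Fin.val_mk]
    omega

end Aux


section Analysis

variable {d r : ℕ}

/-- The coordinate-splitting continuous linear equivalence. -/
noncomputable def splitCL (hr : r ≤ d) :
    (Fin d → ℝ) ≃L[ℝ] (Fin r → ℝ) × (Fin (d - r) → ℝ) :=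
  (splitL hr).toContinuousLinearEquiv

lemma splitCL_apply (hr : r ≤ d) (x : Fin d → ℝ) : splitCL hr x = splitFun hr x := rfl

lemma splitCL_symm_apply (hr : r ≤ d) (ab : (Fin r → ℝ) × (Fin (d - r) → ℝ)) :
    (splitCL hr).symm ab = glueFun hr ab := rfl

/-- Derivative of the lazy map, as a function of the first block of coordinates. -/
noncomputable def lazyDeriv (hr : r ≤ d) (U : Matrix (Fin d) (Fin d) ℝ)
    (τ : (Fin r → ℝ) → (Fin r → ℝ)) (a : Fin r → ℝ) : (Fin d → ℝ) →L[ℝ] (Fin d → ℝ) :=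
  (LinearMap.toContinuousLinearMap U.mulVecLin) ∘L
    (((splitCL hr).symm : ((Fin r → ℝ) × (Fin (d - r) → ℝ)) →L[ℝ] (Fin d → ℝ)) ∘L
      (((fderiv ℝ τ a).prodMap (ContinuousLinearMap.id ℝ (Fin (d - r) → ℝ))) ∘L
        ((splitCL hr : (Fin d → ℝ) →L[ℝ] ((Fin r → ℝ) × (Fin (d - r) → ℝ))))))

lemma hasFDerivAt_lazyMap (hr : r ≤ d) (U : Matrix (Fin d) (Fin d) ℝ)
    {τ : (Fin r → ℝ) → (Fin r → ℝ)} (hτ : ContDiff ℝ 1 τ) (z : Fin d → ℝ) :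
    HasFDerivAt (lazyMap hr U τ) (lazyDeriv hr U τ (splitFun hr z).1) z := by
  have h1 : HasFDerivAt (Prod.map τ (id : (Fin (d - r) → ℝ) → (Fin (d - r) → ℝ)))
      ((fderiv ℝ τ (splitFun hr z).1).prodMap (ContinuousLinearMap.id ℝ (Fin (d - r) → ℝ)))
      (splitCL hr z) :=
    HasFDerivAt.prodMap _ ((hτ.differentiable one_ne_zero _).hasFDerivAt) (hasFDerivAt_id _)
  have h2 := h1.comp z ((splitCL hr).hasFDerivAt)
  have h3 := ((splitCL hr).symm.hasFDerivAt (x := (Prod.map τ id ∘ splitCL hr) z)).comp z h2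
  have h4 := ((LinearMap.toContinuousLinearMap U.mulVecLin).hasFDerivAt
      (x := ((splitCL hr).symm ∘ (Prod.map τ id ∘ splitCL hr)) z)).comp z h3
  rw [lazyMap_eq]
  exact h4

lemma fderiv_comp_inverse {n : ℕ} {τ σ : (Fin n → ℝ) → (Fin n → ℝ)} (hτ : IsDiffeo τ σ)
    (a : Fin n → ℝ) :
    (fderiv ℝ σ (τ a)) ∘L (fderiv ℝ τ a) = ContinuousLinearMap.id ℝ (Fin n → ℝ) := by
  obtain ⟨hτ1, hσ1, hlr, hrl⟩ := hτ
  have h1 : HasFDerivAt (σ ∘ τ) ((fderiv ℝ σ (τ a)) ∘L (fderiv ℝ τ a)) a :=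
    ((hσ1.differentiable one_ne_zero _).hasFDerivAt).comp a ((hτ1.differentiable one_ne_zero _).hasFDerivAt)
  have h2 : (σ ∘ τ) = id := funext hlr
  rw [h2] at h1
  exact h1.unique (hasFDerivAt_id a)

lemma lazyDeriv_comp_eq_id (hr : r ≤ d) {U : Matrix (Fin d) (Fin d) ℝ} (hU : U * Uᵀ = 1)
    {τ σ : (Fin r → ℝ) → (Fin r → ℝ)} (hτ : IsDiffeo τ σ) (a : Fin r → ℝ) :
    (((splitCL hr).symm : ((Fin r → ℝ) × (Fin (d - r) → ℝ)) →L[ℝ] (Fin d → ℝ)) ∘L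
      (((fderiv ℝ σ (τ a)).prodMap (ContinuousLinearMap.id ℝ (Fin (d - r) → ℝ))) ∘L
        ((splitCL hr : (Fin d → ℝ) →L[ℝ] ((Fin r → ℝ) × (Fin (d - r) → ℝ))) ∘L
          (LinearMap.toContinuousLinearMap Uᵀ.mulVecLin)))) ∘L
      lazyDeriv hr U τ a = ContinuousLinearMap.id ℝ (Fin d → ℝ) := by
  have hUtU : Uᵀ * U = 1 := mul_eq_one_comm.mp hU
  have hcomp := fderiv_comp_inverse hτ a
  refine ContinuousLinearMap.ext fun x => ?_
  simp only [lazyDeriv, ContinuousLinearMap.comp_apply, ContinuousLinearMap.id_apply,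
    LinearMap.coe_toContinuousLinearMap', Matrix.mulVecLin_apply,
    ContinuousLinearEquiv.coe_coe, Matrix.mulVec_mulVec, hUtU, Matrix.one_mulVec,
    ContinuousLinearEquiv.apply_symm_apply, ContinuousLinearMap.coe_prodMap', Prod.map_apply]
  simp only [Prod.map, ContinuousLinearMap.id_apply]
  show (splitCL hr).symm
      ((fderiv ℝ σ (τ a)) ((fderiv ℝ τ a) ((splitCL hr) x).1), ((splitCL hr) x).2) = x
  have hpt : (fderiv ℝ σ (τ a)) ((fderiv ℝ τ a) ((splitCL hr) x).1) = ((splitCL hr) x).1 := by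
    have := congrArg (fun L : (Fin r → ℝ) →L[ℝ] (Fin r → ℝ) => L (((splitCL hr) x).1)) hcomp
    simpa using this
  rw [hpt]
  exact (splitCL hr).symm_apply_apply x

lemma lazyDeriv_det_ne_zero (hr : r ≤ d) {U : Matrix (Fin d) (Fin d) ℝ} (hU : U * Uᵀ = 1)
    {τ σ : (Fin r → ℝ) → (Fin r → ℝ)} (hτ : IsDiffeo τ σ) (a : Fin r → ℝ) :
    (lazyDeriv hr U τ a).det ≠ 0 := by
  have h := congrArg (fun L : (Fin d → ℝ) →L[ℝ] (Fin d → ℝ) => L.det)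
    (lazyDeriv_comp_eq_id hr hU hτ a)
  simp only [ContinuousLinearMap.det, ContinuousLinearMap.coe_comp, LinearMap.det_comp,
    ContinuousLinearMap.coe_id, LinearMap.det_id] at h
  intro h0
  have h0' : LinearMap.det ((lazyDeriv hr U τ a) : (Fin d → ℝ) →ₗ[ℝ] (Fin d → ℝ)) = 0 := h0
  have hdc : ∀ A B : (Fin d → ℝ) →L[ℝ] (Fin d → ℝ),
      LinearMap.det ((A ∘L B : (Fin d → ℝ) →L[ℝ] (Fin d → ℝ)) : (Fin d → ℝ) →ₗ[ℝ] (Fin d → ℝ)) =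
        LinearMap.det (A : (Fin d → ℝ) →ₗ[ℝ] (Fin d → ℝ)) *
          LinearMap.det (B : (Fin d → ℝ) →ₗ[ℝ] (Fin d → ℝ)) :=
    fun A B => LinearMap.det_comp _ _
  rw [hdc, h0', mul_zero] at h
  exact zero_ne_one h

lemma continuous_lazyDeriv_det (hr : r ≤ d) (U : Matrix (Fin d) (Fin d) ℝ)
    {τ : (Fin r → ℝ) → (Fin r → ℝ)} (hτ : ContDiff ℝ 1 τ) :
    Continuous fun a => (lazyDeriv hr U τ a).det := by
  have hD : Continuous fun a => fderiv ℝ τ a := hτ.continuous_fderiv one_ne_zero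
  have hcont : ∀ v : Fin d → ℝ, Continuous fun a => lazyDeriv hr U τ a v := by
    intro v
    have h1 : Continuous fun a => (fderiv ℝ τ a) ((splitCL hr v).1) :=
      ((ContinuousLinearMap.apply ℝ (Fin r → ℝ) ((splitCL hr v).1)).continuous).comp hD
    have h2 : Continuous fun a =>
        ((fderiv ℝ τ a) ((splitCL hr v).1), (splitCL hr v).2) :=
      h1.prodMk continuous_const
    exact ((LinearMap.toContinuousLinearMap U.mulVecLin).continuous.comp
      (((splitCL hr).symm.continuous.comp h2)))
  have hdet : (fun a => (lazyDeriv hr U τ a).det) =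
      fun a => Matrix.det (LinearMap.toMatrix' ((lazyDeriv hr U τ a) :
        (Fin d → ℝ) →ₗ[ℝ] (Fin d → ℝ))) := by
    funext a
    rw [LinearMap.det_toMatrix']
  rw [hdet]
  refine Continuous.matrix_det ?_
  refine continuous_matrix fun i j => ?_
  have : ∀ a, LinearMap.toMatrix' ((lazyDeriv hr U τ a) :
      (Fin d → ℝ) →ₗ[ℝ] (Fin d → ℝ)) i j = lazyDeriv hr U τ a (Pi.single j 1) i := by
    intro a
    have hv : (fun j' => if j' = j then (1:ℝ) else 0) = Pi.single j 1 := by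
      funext j'
      rw [Pi.single_apply]
    rw [LinearMap.toMatrix'_apply]
    rfl
  simp only [this]
  exact (continuous_apply i).comp (hcont (Pi.single j 1))

/-- Inverse of the lazy map. -/
def lazyInv (hr : r ≤ d) (U : Matrix (Fin d) (Fin d) ℝ)
    (σ : (Fin r → ℝ) → (Fin r → ℝ)) (x : Fin d → ℝ) : Fin d → ℝ :=
  glueFun hr (σ (splitFun hr (Uᵀ.mulVec x)).1, (splitFun hr (Uᵀ.mulVec x)).2)

lemma lazyInv_leftInverse (hr : r ≤ d) {U : Matrix (Fin d) (Fin d) ℝ} (hU : U * Uᵀ = 1)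
    {τ σ : (Fin r → ℝ) → (Fin r → ℝ)} (hτ : IsDiffeo τ σ) :
    Function.LeftInverse (lazyInv hr U σ) (lazyMap hr U τ) := by
  have hUtU : Uᵀ * U = 1 := mul_eq_one_comm.mp hU
  intro z
  rw [lazyMap_eq, lazyInv]
  simp only [Matrix.mulVec_mulVec, hUtU, Matrix.one_mulVec, split_glue]
  rw [hτ.2.2.1 _]
  exact glue_split hr z

lemma lazyInv_rightInverse (hr : r ≤ d) {U : Matrix (Fin d) (Fin d) ℝ} (hU : U * Uᵀ = 1)
    {τ σ : (Fin r → ℝ) → (Fin r → ℝ)} (hτ : IsDiffeo τ σ) :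
    Function.RightInverse (lazyInv hr U σ) (lazyMap hr U τ) := by
  intro x
  rw [lazyMap_eq, lazyInv]
  simp only [split_glue]
  rw [hτ.2.2.2 _, glue_split hr]
  have : U.mulVec (Uᵀ.mulVec x) = x := by
    rw [Matrix.mulVec_mulVec, hU, Matrix.one_mulVec]
  exact this

lemma continuous_lazyMap (hr : r ≤ d) (U : Matrix (Fin d) (Fin d) ℝ)
    {τ : (Fin r → ℝ) → (Fin r → ℝ)} (hτ : ContDiff ℝ 1 τ) :
    Continuous (lazyMap hr U τ) := by
  rw [lazyMap_eq]
  refine (LinearMap.toContinuousLinearMap U.mulVecLin).continuous.comp ?_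
  have h1 : Continuous (splitCL hr) := (splitCL hr).continuous
  have h2 : Continuous fun z => (τ (splitFun hr z).1, (splitFun hr z).2) := by
    refine Continuous.prodMk ?_ ?_
    · exact hτ.continuous.comp (continuous_fst.comp h1)
    · exact continuous_snd.comp h1
  exact (splitCL hr).symm.continuous.comp h2

end Analysis


section Gauss

lemma gaussD_pos {d : ℕ} (x : Fin d → ℝ) : 0 < gaussD d x := by
  unfold gaussD
  positivity

lemma continuous_gaussD (d : ℕ) : Continuous (gaussD d) := by
  unfold gaussD
  exact continuous_const.mul (Real.continuous_exp.comp
    (((continuous_finset_sum _ fun i _ => (continuous_apply i).pow 2).neg).div_const 2))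

lemma gaussD_prod {d : ℕ} (x : Fin d → ℝ) :
    gaussD d x = ∏ i, ((2 * Real.pi) ^ (-(1:ℝ) / 2) * Real.exp (-(x i) ^ 2 / 2)) := by
  unfold gaussD
  rw [Finset.prod_mul_distrib, Finset.prod_const, Finset.card_univ, Fintype.card_fin]
  congr 1
  · rw [← Real.rpow_natCast ((2 * Real.pi) ^ (-(1:ℝ) / 2)) d,
      ← Real.rpow_mul (by positivity : (0:ℝ) ≤ 2 * Real.pi)]
    congr 1
    push_cast
    ring
  · rw [← Real.exp_sum]
    congr 1
    rw [← Finset.sum_div]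
    congr 1
    rw [← Finset.sum_neg_distrib]

lemma integral_gauss1 : ∫ t : ℝ, (2 * Real.pi) ^ (-(1:ℝ) / 2) * Real.exp (-t ^ 2 / 2) = 1 := by
  rw [integral_const_mul]
  have h : (fun t : ℝ => Real.exp (-t ^ 2 / 2)) = fun t => Real.exp (-(1/2 : ℝ) * t ^ 2) := by
    funext t
    congr 1
    ring
  rw [h, integral_gaussian]
  rw [show (Real.pi / (1/2 : ℝ)) = 2 * Real.pi by ring]
  rw [Real.sqrt_eq_rpow, ← Real.rpow_add (by positivity)]
  norm_num

lemma integrable_gauss1 :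
    Integrable (fun t : ℝ => (2 * Real.pi) ^ (-(1:ℝ) / 2) * Real.exp (-t ^ 2 / 2)) := by
  have h : (fun t : ℝ => Real.exp (-t ^ 2 / 2)) = fun t => Real.exp (-(1/2 : ℝ) * t ^ 2) := by
    funext t
    congr 1
    ring
  have h2 := (integrable_exp_neg_mul_sq (by norm_num : (0:ℝ) < 1/2)).const_mul
    ((2 * Real.pi) ^ (-(1:ℝ) / 2))
  refine h2.congr (ae_of_all _ fun t => ?_)
  show (2 * Real.pi) ^ (-(1:ℝ) / 2) * Real.exp (-(1/2 : ℝ) * t ^ 2)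
      = (2 * Real.pi) ^ (-(1:ℝ) / 2) * Real.exp (-t ^ 2 / 2)
  rw [show -(1/2:ℝ) * t ^ 2 = -t ^ 2 / 2 by ring]

lemma integrable_gaussD (d : ℕ) : Integrable (gaussD d) := by
  have h := Integrable.fintype_prod (ι := Fin d)
    (f := fun _ => fun t : ℝ => (2 * Real.pi) ^ (-(1:ℝ) / 2) * Real.exp (-t ^ 2 / 2))
    (fun _ => integrable_gauss1)
  exact h.congr (ae_of_all _ fun x => (gaussD_prod x).symm)

lemma lintegral_gaussD (d : ℕ) :
    ∫⁻ x : Fin d → ℝ, ENNReal.ofReal (gaussD d x) = 1 := by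
  rw [← ofReal_integral_eq_lintegral_ofReal (integrable_gaussD d)
    (ae_of_all _ fun x => (gaussD_pos x).le)]
  have h : ∫ x : Fin d → ℝ, gaussD d x = 1 := by
    have h1 : ∫ x : Fin d → ℝ, gaussD d x
        = ∫ x : Fin d → ℝ, ∏ i, ((2 * Real.pi) ^ (-(1:ℝ) / 2) * Real.exp (-(x i) ^ 2 / 2)) :=
      integral_congr_ae (ae_of_all _ fun x => gaussD_prod x)
    rw [h1, volume_pi, integral_fintype_prod_eq_prod (ι := Fin d)
      (f := fun _ => fun t : ℝ => (2 * Real.pi) ^ (-(1:ℝ) / 2) * Real.exp (-t ^ 2 / 2))]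
    rw [integral_gauss1]
    simp
  rw [h, ENNReal.ofReal_one]

instance isProbStdGauss (d : ℕ) : IsProbabilityMeasure (stdGauss d) := by
  constructor
  rw [stdGauss, withDensity_apply _ MeasurableSet.univ, Measure.restrict_univ]
  exact lintegral_gaussD d

lemma map_withDensity_comp {α β : Type*} [MeasurableSpace α] [MeasurableSpace β]
    (μ : Measure α) {f : α → β} (hf : Measurable f) {q : β → ℝ≥0∞} (hq : Measurable q) :
    Measure.map f (μ.withDensity (q ∘ f)) = (Measure.map f μ).withDensity q := by
  refine Measure.ext fun s hs => ?_
  rw [Measure.map_apply hf hs, withDensity_apply _ (hf hs), withDensity_apply _ hs]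
  exact (setLIntegral_map hs hq hf).symm

lemma absolutelyContinuous_withDensity_of_pos {α : Type*} [MeasurableSpace α] (μ : Measure α)
    {f : α → ℝ≥0∞} (hf : Measurable f) (h0 : ∀ x, f x ≠ 0) : μ ≪ μ.withDensity f := by
  intro s hs
  set t := toMeasurable (μ.withDensity f) s with ht
  have htm : MeasurableSet t := measurableSet_toMeasurable _ _
  have hts : s ⊆ t := subset_toMeasurable _ _
  have h1 : μ.withDensity f t = 0 := by rw [ht, measure_toMeasurable]; exact hs
  rw [withDensity_apply _ htm] at h1
  have h2 : f =ᵐ[μ.restrict t] 0 := (lintegral_eq_zero_iff hf).mp h1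
  have h3 : μ.restrict t {x | f x ≠ 0} = 0 := by
    rw [EventuallyEq, ae_iff] at h2
    simpa using h2
  have huniv : {x | f x ≠ 0} = Set.univ := Set.eq_univ_of_forall h0
  rw [huniv] at h3
  have h4 : μ t = 0 := by
    have := Measure.restrict_apply_univ (μ := μ) t
    rw [← this]
    simpa [Measure.restrict_univ] using h3
  exact measure_mono_null hts h4

end Gauss

section MapLazy

variable {d r : ℕ}

lemma proj_lazyMap (hr : r ≤ d) {U : Matrix (Fin d) (Fin d) ℝ} (hU : U * Uᵀ = 1)
    (τ : (Fin r → ℝ) → (Fin r → ℝ)) (z : Fin d → ℝ) :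
    (colsFirst r hr U)ᵀ.mulVec (lazyMap hr U τ z) = τ (splitFun hr z).1 := by
  have hUtU : Uᵀ * U = 1 := mul_eq_one_comm.mp hU
  rw [lazyMap_eq]
  funext j
  have h1 : (colsFirst r hr U)ᵀ.mulVec
        (U.mulVec (glueFun hr (τ (splitFun hr z).1, (splitFun hr z).2))) j
      = Uᵀ.mulVec (U.mulVec (glueFun hr (τ (splitFun hr z).1, (splitFun hr z).2)))
          (Fin.castLE hr j) := rfl
  rw [h1, Matrix.mulVec_mulVec, hUtU, Matrix.one_mulVec]
  have h : ((Fin.castLE hr j : Fin d) : ℕ) < r := j.isLt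
  rw [glueFun, dif_pos h]
  exact congrArg (τ (splitFun hr z).1) (Fin.ext rfl)

lemma sum_sq_mulVec {U : Matrix (Fin d) (Fin d) ℝ} (hU : U * Uᵀ = 1) (w : Fin d → ℝ) :
    ∑ i, (U.mulVec w i) ^ 2 = ∑ i, (w i) ^ 2 := by
  have hUtU : Uᵀ * U = 1 := mul_eq_one_comm.mp hU
  have h1 : U.mulVec w ⬝ᵥ U.mulVec w = w ⬝ᵥ w := by
    rw [Matrix.dotProduct_mulVec]
    have h2 : Matrix.vecMul (U.mulVec w) U = w := by
      rw [← Matrix.mulVec_transpose, Matrix.mulVec_mulVec, hUtU, Matrix.one_mulVec]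
    rw [h2]
  simpa [dotProduct, pow_two] using h1

lemma sum_sq_glue (hr : r ≤ d) (ab : (Fin r → ℝ) × (Fin (d - r) → ℝ)) :
    ∑ k, (glueFun hr ab k) ^ 2 = (∑ j, (ab.1 j) ^ 2) + ∑ j, (ab.2 j) ^ 2 := by
  rw [sum_split hr (fun k => (glueFun hr ab k) ^ 2)]
  congr 1
  · refine Finset.sum_congr rfl fun j _ => ?_
    have h : ((Fin.castLE hr j : Fin d) : ℕ) < r := j.isLt
    rw [glueFun, dif_pos h]
    exact congrArg (fun t => t ^ 2) (congrArg ab.1 (Fin.ext rfl))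
  · refine Finset.sum_congr rfl fun j _ => ?_
    have h : ¬ ((⟨r + (j : ℕ), by have := j.isLt; omega⟩ : Fin d) : ℕ) < r := by
      simp only [Fin.val_mk]
      omega
    rw [glueFun, dif_neg h]
    refine congrArg (fun t => t ^ 2) (congrArg ab.2 (Fin.ext ?_))
    simp only [Fin.val_mk]
    omega

lemma sum_sq_split (hr : r ≤ d) (z : Fin d → ℝ) :
    ∑ k, (z k) ^ 2 = (∑ j, ((splitFun hr z).1 j) ^ 2) + ∑ j, ((splitFun hr z).2 j) ^ 2 := by
  conv_lhs => rw [← glue_split hr z]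
  exact sum_sq_glue hr (splitFun hr z)

lemma gauss_change (hr : r ≤ d) {U : Matrix (Fin d) (Fin d) ℝ} (hU : U * Uᵀ = 1)
    {τ σ : (Fin r → ℝ) → (Fin r → ℝ)} (hτ : IsDiffeo τ σ) (z : Fin d → ℝ) :
    ENNReal.ofReal (gaussD d z)
      = ENNReal.ofReal |(lazyDeriv hr U τ (splitFun hr z).1).det|
        * ENNReal.ofReal
            ((fun y => Real.exp (((∑ j, y j ^ 2) - ∑ j, (σ y) j ^ 2) / 2)
                / |(lazyDeriv hr U τ (σ y)).det|) ((colsFirst r hr U)ᵀ.mulVec (lazyMap hr U τ z))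
              * gaussD d (lazyMap hr U τ z)) := by
  rw [proj_lazyMap hr hU τ z]
  rw [← ENNReal.ofReal_mul (abs_nonneg _)]
  congr 1
  set a := (splitFun hr z).1 with ha
  set b := (splitFun hr z).2 with hb
  have hσa : σ (τ a) = a := hτ.2.2.1 a
  have hsum1 : ∑ i, (lazyMap hr U τ z i) ^ 2 = (∑ j, (τ a j) ^ 2) + ∑ j, (b j) ^ 2 := by
    rw [lazyMap_eq, sum_sq_mulVec hU]
    exact sum_sq_glue hr (τ a, b)
  have hsum2 : ∑ i, (z i) ^ 2 = (∑ j, (a j) ^ 2) + ∑ j, (b j) ^ 2 := sum_sq_split hr z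
  have hJ : |(lazyDeriv hr U τ a).det| ≠ 0 :=
    abs_ne_zero.mpr (lazyDeriv_det_ne_zero hr hU hτ a)
  simp only [hσa]
  unfold gaussD
  rw [hsum1, hsum2]
  set A := ∑ j, (a j) ^ 2
  set B := ∑ j, (b j) ^ 2
  set T := ∑ j, (τ a j) ^ 2
  set C := (2 * Real.pi) ^ (-(d:ℝ) / 2)
  set J := |(lazyDeriv hr U τ a).det|
  have hstep : J * (Real.exp ((T - A) / 2) / J * (C * Real.exp (-(T + B) / 2)))
      = C * (Real.exp ((T - A) / 2) * Real.exp (-(T + B) / 2)) := by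
    field_simp
  rw [hstep, ← Real.exp_add]
  congr 1
  ring

theorem map_lazy (hr : r ≤ d) {U : Matrix (Fin d) (Fin d) ℝ} (hU : U * Uᵀ = 1)
    {τ σ : (Fin r → ℝ) → (Fin r → ℝ)} (hτ : IsDiffeo τ σ) :
    ∃ g : (Fin r → ℝ) → ℝ, Measurable g ∧ (∀ y, 0 < g y) ∧
      Measure.map (lazyMap hr U τ) (stdGauss d) =
        volume.withDensity
          (fun x => ENNReal.ofReal (g ((colsFirst r hr U)ᵀ.mulVec x) * gaussD d x)) := by
  set T := lazyMap hr U τ with hT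
  set g : (Fin r → ℝ) → ℝ := fun y => Real.exp (((∑ j, y j ^ 2) - ∑ j, (σ y) j ^ 2) / 2)
    / |(lazyDeriv hr U τ (σ y)).det| with hg
  have hJne : ∀ a, (lazyDeriv hr U τ a).det ≠ 0 := lazyDeriv_det_ne_zero hr hU hτ
  have hgcont : Continuous g := by
    refine Continuous.div ?_ ?_ fun y => abs_ne_zero.mpr (hJne (σ y))
    · refine Real.continuous_exp.comp ?_
      refine Continuous.div_const ?_ 2
      refine Continuous.sub ?_ ?_
      · exact continuous_finset_sum _ fun j _ => (continuous_apply j).pow 2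
      · exact (continuous_finset_sum _ fun j _ => (continuous_apply j).pow 2).comp
          hτ.2.1.continuous
    · exact ((continuous_lazyDeriv_det hr U hτ.1).comp hτ.2.1.continuous).abs
  have hgpos : ∀ y, 0 < g y :=
    fun y => div_pos (Real.exp_pos _) (abs_pos.mpr (hJne (σ y)))
  refine ⟨g, hgcont.measurable, hgpos, ?_⟩
  have hTmeas : Measurable T := (continuous_lazyMap hr U hτ.1).measurable
  have hprojcont : Continuous fun x : Fin d → ℝ => (colsFirst r hr U)ᵀ.mulVec x :=
    (LinearMap.toContinuousLinearMap ((colsFirst r hr U)ᵀ).mulVecLin).continuous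
  have hJmeas : Measurable fun z : Fin d → ℝ =>
      ENNReal.ofReal |(lazyDeriv hr U τ (splitFun hr z).1).det| := by
    refine Measurable.ennreal_ofReal ?_
    refine Continuous.measurable ?_
    refine Continuous.abs ?_
    exact (continuous_lazyDeriv_det hr U hτ.1).comp
      (continuous_fst.comp (splitCL hr).continuous)
  have hqmeas : Measurable fun x : Fin d → ℝ =>
      ENNReal.ofReal (g ((colsFirst r hr U)ᵀ.mulVec x) * gaussD d x) := by
    refine Measurable.ennreal_ofReal ?_
    exact ((hgcont.comp hprojcont).mul (continuous_gaussD d)).measurable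
  have hdens : stdGauss d =
      Measure.withDensity
        (volume.withDensity fun z => ENNReal.ofReal |(lazyDeriv hr U τ (splitFun hr z).1).det|)
        ((fun x => ENNReal.ofReal (g ((colsFirst r hr U)ᵀ.mulVec x) * gaussD d x)) ∘ T) := by
    rw [stdGauss, ← withDensity_mul _ hJmeas (hqmeas.comp hTmeas)]
    congr 1
    funext z
    exact gauss_change hr hU hτ z
  have hmap1 : Measure.map T
      (volume.withDensity fun z => ENNReal.ofReal |(lazyDeriv hr U τ (splitFun hr z).1).det|)
      = volume := by
    have hder : ∀ x ∈ Set.univ,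
        HasFDerivWithinAt T (lazyDeriv hr U τ (splitFun hr x).1) Set.univ x :=
      fun x _ => (hasFDerivAt_lazyMap hr U hτ.1 x).hasFDerivWithinAt
    have hinj : Set.InjOn T Set.univ :=
      ((lazyInv_leftInverse hr hU hτ).injective).injOn
    have h := map_withDensity_abs_det_fderiv_eq_addHaar (volume : Measure (Fin d → ℝ)) (s := Set.univ)
      MeasurableSet.univ.nullMeasurableSet hder hinj
    rw [Measure.restrict_univ] at h
    rw [h, Set.image_univ, (lazyInv_rightInverse hr hU hτ).surjective.range_eq,
      Measure.restrict_univ]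
  rw [hdens, map_withDensity_comp _ hTmeas hqmeas, hmap1]

end MapLazy


section Gibbs

lemma gibbs_nonneg {α : Type*} [MeasurableSpace α] {μ ν : Measure α} [IsProbabilityMeasure μ]
    [IsProbabilityMeasure ν] (hμν : μ ≪ ν)
    (hint : Integrable (fun x => Real.log ((μ.rnDeriv ν x).toReal)) μ) :
    0 ≤ ∫ x, Real.log ((μ.rnDeriv ν x).toReal) ∂μ := by
  have hint' : Integrable (llr μ ν) μ := hint
  have hexp : (fun x => Real.exp (-llr μ ν x)) =ᵐ[μ] fun x => (ν.rnDeriv μ x).toReal :=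
    exp_neg_llr hμν
  have hexp_int : Integrable (fun x => Real.exp (-llr μ ν x)) μ :=
    (Measure.integrable_toReal_rnDeriv).congr hexp.symm
  have hjen : Real.exp (∫ x, -llr μ ν x ∂μ) ≤ ∫ x, Real.exp (-llr μ ν x) ∂μ := by
    refine convexOn_exp.map_integral_le (Real.continuous_exp.continuousOn) isClosed_univ
      (ae_of_all _ fun x => Set.mem_univ _) hint'.neg ?_
    exact hexp_int
  have hle1 : ∫ x, Real.exp (-llr μ ν x) ∂μ ≤ 1 := by
    rw [integral_congr_ae hexp]
    have h := Measure.setIntegral_toReal_rnDeriv_le (μ := ν) (ν := μ) (s := Set.univ)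
      (by simp : ν Set.univ ≠ ⊤)
    simpa using h
  have h0 : ∫ x, -llr μ ν x ∂μ ≤ 0 := Real.exp_le_one_iff.mp (hjen.trans hle1)
  rw [integral_neg] at h0
  have : 0 ≤ ∫ x, llr μ ν x ∂μ := by linarith
  exact this

end Gibbs

/-- Pythagorean identity for the KL projection onto lazy maps, where
`T⋆ ∈ 𝒯_r(U)` pushes `ρ` forward to the density `f⋆(U_rᵀ x) ρ(x)`, with
`f⋆ = E[π/ρ | U_rᵀ X]`, `X ∼ ρ`. In particular `T⋆` is a KL minimizer. -/
theorem kl_pythagorean {d r : ℕ} (hr : r ≤ d)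
    (U : Matrix (Fin d) (Fin d) ℝ) (hU : U * Uᵀ = 1)
    (πm : Measure (Fin d → ℝ)) [IsProbabilityMeasure πm] (hac : πm ≪ volume)
    (fstar : (Fin r → ℝ) → ℝ)
    (hfstar : (fun x => fstar ((colsFirst r hr U)ᵀ.mulVec x)) =ᵐ[stdGauss d]
      MeasureTheory.condExp
        (MeasurableSpace.comap (fun x => (colsFirst r hr U)ᵀ.mulVec x) (by infer_instance))
        (stdGauss d) (fun x => (πm.rnDeriv (stdGauss d) x).toReal))
    (τs σs : (Fin r → ℝ) → (Fin r → ℝ)) (hτs : IsDiffeo τs σs)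
    (hTstar : Measure.map (lazyMap hr U τs) (stdGauss d) =
      volume.withDensity
        (fun x => ENNReal.ofReal (fstar ((colsFirst r hr U)ᵀ.mulVec x) * gaussD d x)))
    (hfin : ∀ τ σ : (Fin r → ℝ) → (Fin r → ℝ), IsDiffeo τ σ →
      klDiv πm (Measure.map (lazyMap hr U τ) (stdGauss d)) ≠ ⊤) :
    ∀ τ σ : (Fin r → ℝ) → (Fin r → ℝ), IsDiffeo τ σ →
      klDiv πm (Measure.map (lazyMap hr U τ) (stdGauss d)) =
        klDiv πm (Measure.map (lazyMap hr U τs) (stdGauss d)) +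
        klDiv (Measure.map (lazyMap hr U τs) (stdGauss d))
              (Measure.map (lazyMap hr U τ) (stdGauss d)) ∧
      klDiv πm (Measure.map (lazyMap hr U τs) (stdGauss d)) ≤
        klDiv πm (Measure.map (lazyMap hr U τ) (stdGauss d)) := by
  intro τ σ hτ
  classical
  set ρ := stdGauss d with hρdef
  haveI : IsProbabilityMeasure ρ := isProbStdGauss d
  haveI : πm.HaveLebesgueDecomposition ρ := Measure.haveLebesgueDecomposition_of_sigmaFinite πm ρ
  set proj : (Fin d → ℝ) → (Fin r → ℝ) := fun x => (colsFirst r hr U)ᵀ.mulVec x with hprojdef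
  have hprojmeas : Measurable proj :=
    (LinearMap.toContinuousLinearMap ((colsFirst r hr U)ᵀ).mulVecLin).continuous.measurable
  have hm : MeasurableSpace.comap proj inferInstance
      ≤ (MeasurableSpace.pi : MeasurableSpace (Fin d → ℝ)) := by
    rintro s ⟨t, ht, rfl⟩
    exact hprojmeas ht
  set h : (Fin d → ℝ) → ℝ := fun x => (πm.rnDeriv ρ x).toReal with hhdef
  set F : (Fin d → ℝ) → ℝ :=
    MeasureTheory.condExp (MeasurableSpace.comap proj inferInstance) ρ h with hFdef
  set ν := Measure.map (lazyMap hr U τ) ρ with hνdef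
  set νs := Measure.map (lazyMap hr U τs) ρ with hνsdef
  have hTmeas : Measurable (lazyMap hr U τ) := (continuous_lazyMap hr U hτ.1).measurable
  have hTsmeas : Measurable (lazyMap hr U τs) := (continuous_lazyMap hr U hτs.1).measurable
  haveI : IsProbabilityMeasure ν := Measure.isProbabilityMeasure_map hTmeas.aemeasurable
  haveI : IsProbabilityMeasure νs := Measure.isProbabilityMeasure_map hTsmeas.aemeasurable
  haveI : SigmaFinite (ρ.trim hm) := by
    haveI := isFiniteMeasure_trim (μ := ρ) hm
    infer_instance
  have hgaussmeas : Measurable fun x : Fin d → ℝ => ENNReal.ofReal (gaussD d x) :=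
    (continuous_gaussD d).measurable.ennreal_ofReal
  have hρvol : ρ ≪ (volume : Measure (Fin d → ℝ)) := withDensity_absolutelyContinuous _ _
  have hvolρ : (volume : Measure (Fin d → ℝ)) ≪ ρ := by
    refine absolutelyContinuous_withDensity_of_pos volume hgaussmeas fun x => ?_
    simp only [ne_eq, ENNReal.ofReal_eq_zero, not_le]
    exact gaussD_pos x
  have hπρ : πm ≪ ρ := hac.trans hvolρ
  obtain ⟨g, hgmeas, hgpos, hνdens⟩ := map_lazy hr hU hτ
  have hFmeas_m : StronglyMeasurable[MeasurableSpace.comap proj inferInstance] F :=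
    stronglyMeasurable_condExp
  have hFmeas : Measurable F := (hFmeas_m.mono hm).measurable
  have hFnonneg : 0 ≤ᵐ[ρ] F :=
    condExp_nonneg (ae_of_all _ fun x => ENNReal.toReal_nonneg)
  have hfs' : (fun x => fstar (proj x)) =ᵐ[ρ] F := hfstar
  -- densities of the two pushforwards with respect to ρ
  have hνs_dens : νs = ρ.withDensity fun x => ENNReal.ofReal (F x) := by
    rw [hTstar]
    have h1 : (fun x => ENNReal.ofReal (fstar (proj x) * gaussD d x)) =ᵐ[volume]
        (fun x => ENNReal.ofReal (gaussD d x)) * fun x => ENNReal.ofReal (F x) := by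
      filter_upwards [hvolρ.ae_le hfs', hvolρ.ae_le hFnonneg] with x h1 h2
      rw [Pi.mul_apply, h1, mul_comm (F x), ENNReal.ofReal_mul (gaussD_pos x).le]
    rw [withDensity_congr_ae h1, withDensity_mul _ hgaussmeas hFmeas.ennreal_ofReal]
    rfl
  have hgpmeas : Measurable fun x => ENNReal.ofReal (g (proj x)) :=
    (hgmeas.comp hprojmeas).ennreal_ofReal
  have hν_dens : ν = ρ.withDensity fun x => ENNReal.ofReal (g (proj x)) := by
    rw [hνdef, hρdef, hνdens]
    have h1 : (fun x => ENNReal.ofReal (g (proj x) * gaussD d x)) =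
        (fun x => ENNReal.ofReal (gaussD d x)) * fun x => ENNReal.ofReal (g (proj x)) := by
      funext x
      rw [Pi.mul_apply, mul_comm (g (proj x)), ENNReal.ofReal_mul (gaussD_pos x).le]
    rw [h1, withDensity_mul _ hgaussmeas hgpmeas]
    rfl
  -- absolute continuity
  have hνρ : ν ≪ ρ := by rw [hν_dens]; exact withDensity_absolutelyContinuous _ _
  have hρν : ρ ≪ ν := by
    rw [hν_dens]
    refine absolutelyContinuous_withDensity_of_pos ρ hgpmeas fun x => ?_
    simp only [ne_eq, ENNReal.ofReal_eq_zero, not_le]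
    exact hgpos (proj x)
  have hνsρ : νs ≪ ρ := by rw [hνs_dens]; exact withDensity_absolutelyContinuous _ _
  have hνsν : νs ≪ ν := hνsρ.trans hρν
  -- finiteness assumptions
  have hc1 : πm ≪ ν ∧ Integrable (fun x => Real.log ((πm.rnDeriv ν x).toReal)) πm := by
    by_contra hcon
    exact hfin τ σ hτ (by rw [klDiv, if_neg hcon])
  have hc2 : πm ≪ νs ∧ Integrable (fun x => Real.log ((πm.rnDeriv νs x).toReal)) πm := by
    by_contra hcon
    exact hfin τs σs hτs (by rw [klDiv, if_neg hcon])
  obtain ⟨hπν, hint1⟩ := hc1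
  obtain ⟨hπνs, hint2⟩ := hc2
  -- Radon-Nikodym computations
  have hνρ_rn : ν.rnDeriv ρ =ᵐ[ρ] fun x => ENNReal.ofReal (g (proj x)) := by
    rw [hν_dens]
    exact Measure.rnDeriv_withDensity ρ hgpmeas
  have hνsρ_rn : νs.rnDeriv ρ =ᵐ[ρ] fun x => ENNReal.ofReal (F x) := by
    rw [hνs_dens]
    exact Measure.rnDeriv_withDensity ρ hFmeas.ennreal_ofReal
  have hmul1 : πm.rnDeriv ν * ν.rnDeriv ρ =ᵐ[ρ] πm.rnDeriv ρ :=
    Measure.rnDeriv_mul_rnDeriv hπν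
  have hmul2 : πm.rnDeriv νs * νs.rnDeriv ρ =ᵐ[ρ] πm.rnDeriv ρ :=
    Measure.rnDeriv_mul_rnDeriv hπνs
  have hmul3 : νs.rnDeriv ν * ν.rnDeriv ρ =ᵐ[ρ] νs.rnDeriv ρ :=
    Measure.rnDeriv_mul_rnDeriv hνsν
  have hπρ_pos : ∀ᵐ x ∂πm, 0 < πm.rnDeriv ρ x := Measure.rnDeriv_pos hπρ
  have hπρ_fin : ∀ᵐ x ∂πm, πm.rnDeriv ρ x ≠ ⊤ := hπρ.ae_le (Measure.rnDeriv_ne_top _ _)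
  have hνsν_fin : ∀ᵐ x ∂ρ, νs.rnDeriv ν x ≠ ⊤ := hρν.ae_le (Measure.rnDeriv_ne_top _ _)
  -- positivity of F
  have hFsetm : MeasurableSet {x | F x ≤ 0} := measurableSet_le hFmeas measurable_const
  have hFset : νs {x | F x ≤ 0} = 0 := by
    rw [hνs_dens, withDensity_apply _ hFsetm]
    rw [setLIntegral_congr_fun hFsetm (fun x hx =>
      (by simpa using ENNReal.ofReal_eq_zero.mpr hx : ENNReal.ofReal (F x) = (0 : ℝ≥0∞)))]
    simp
  have hFpos_νs : ∀ᵐ x ∂νs, 0 < F x := by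
    rw [ae_iff]
    convert hFset using 2
    ext x
    simp [not_lt]
  have hFpos_π : ∀ᵐ x ∂πm, 0 < F x := by
    rw [ae_iff]
    refine hπνs ?_
    convert hFset using 2
    ext x
    simp [not_lt]
  -- log-likelihood identities
  have hllr1 : (fun x => Real.log ((πm.rnDeriv ν x).toReal)) =ᵐ[πm]
      fun x => Real.log (h x) - Real.log (g (proj x)) := by
    filter_upwards [hπρ.ae_le hmul1, hπρ.ae_le hνρ_rn, hπρ_pos, hπρ_fin] with x h1 h2 h3 h4
    have hgx := hgpos (proj x)
    have h6 : πm.rnDeriv ν x * ENNReal.ofReal (g (proj x)) = πm.rnDeriv ρ x := by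
      rw [← h2]
      exact h1
    have h7 : (πm.rnDeriv ν x).toReal * g (proj x) = h x := by
      rw [hhdef]
      simp only
      rw [← h6, ENNReal.toReal_mul, ENNReal.toReal_ofReal hgx.le]
    have hhx : 0 < h x := ENNReal.toReal_pos h3.ne' h4
    have h8 : (πm.rnDeriv ν x).toReal = h x / g (proj x) := by
      rw [eq_div_iff hgx.ne']
      exact h7
    rw [h8, Real.log_div hhx.ne' hgx.ne']
  have hllr2 : (fun x => Real.log ((πm.rnDeriv νs x).toReal)) =ᵐ[πm]
      fun x => Real.log (h x) - Real.log (F x) := by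
    filter_upwards [hπρ.ae_le hmul2, hπρ.ae_le hνsρ_rn, hπρ_pos, hπρ_fin, hFpos_π]
      with x h1 h2 h3 h4 h5
    have h6 : πm.rnDeriv νs x * ENNReal.ofReal (F x) = πm.rnDeriv ρ x := by
      rw [← h2]
      exact h1
    have h7 : (πm.rnDeriv νs x).toReal * F x = h x := by
      rw [hhdef]
      simp only
      rw [← h6, ENNReal.toReal_mul, ENNReal.toReal_ofReal h5.le]
    have hhx : 0 < h x := ENNReal.toReal_pos h3.ne' h4
    have h8 : (πm.rnDeriv νs x).toReal = h x / F x := by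
      rw [eq_div_iff h5.ne']
      exact h7
    rw [h8, Real.log_div hhx.ne' h5.ne']
  have hllr3 : (fun x => Real.log ((νs.rnDeriv ν x).toReal)) =ᵐ[νs]
      fun x => Real.log (F x) - Real.log (g (proj x)) := by
    have hae : ∀ᵐ x ∂νs, νs.rnDeriv ν x * ENNReal.ofReal (g (proj x)) = ENNReal.ofReal (F x)
        ∧ νs.rnDeriv ν x ≠ ⊤ := by
      refine hνsρ.ae_le ?_
      filter_upwards [hmul3, hνρ_rn, hνsρ_rn, hνsν_fin] with x h1 h2 h3 h4
      refine ⟨?_, h4⟩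
      rw [← h2, ← h3]
      exact h1
    filter_upwards [hae, hFpos_νs] with x hx h5
    obtain ⟨h1, h4⟩ := hx
    have hgx := hgpos (proj x)
    have h7 : (νs.rnDeriv ν x).toReal * g (proj x) = F x := by
      have := congrArg ENNReal.toReal h1
      rwa [ENNReal.toReal_mul, ENNReal.toReal_ofReal hgx.le, ENNReal.toReal_ofReal h5.le]
        at this
    have h8 : (νs.rnDeriv ν x).toReal = F x / g (proj x) := by
      rw [eq_div_iff hgx.ne']
      exact h7
    rw [h8, Real.log_div h5.ne' hgx.ne']
  -- the function Φ
  set Φ : (Fin d → ℝ) → ℝ := fun x => Real.log (F x) - Real.log (g (proj x)) with hΦdef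
  have hΦm : StronglyMeasurable[MeasurableSpace.comap proj inferInstance] Φ := by
    refine StronglyMeasurable.sub ?_ ?_
    · exact (Real.measurable_log.comp hFmeas_m.measurable).stronglyMeasurable
    · have hpm : Measurable[MeasurableSpace.comap proj inferInstance] proj :=
        comap_measurable proj
      exact (Real.measurable_log.comp (hgmeas.comp hpm)).stronglyMeasurable
  have hΦint_π : Integrable Φ πm := by
    refine (hint1.sub hint2).congr ?_
    filter_upwards [hllr1, hllr2] with x h1 h2
    simp only [Pi.sub_apply, hΦdef]
    rw [h1, h2]
    ring
  have hI12 : ∫ x, Real.log ((πm.rnDeriv ν x).toReal) ∂πm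
      - ∫ x, Real.log ((πm.rnDeriv νs x).toReal) ∂πm = ∫ x, Φ x ∂πm := by
    rw [← integral_sub hint1 hint2]
    refine integral_congr_ae ?_
    filter_upwards [hllr1, hllr2] with x h1 h2
    simp only [Pi.sub_apply, hΦdef]
    rw [h1, h2]
    ring
  -- tower property
  have hπ_eq : ρ.withDensity (πm.rnDeriv ρ) = πm := Measure.withDensity_rnDeriv_eq _ _ hπρ
  have hΦh_int : Integrable (fun x => Φ x * h x) ρ := by
    have hΦint' : Integrable Φ (ρ.withDensity (πm.rnDeriv ρ)) := by
      rw [hπ_eq]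
      exact hΦint_π
    exact (integrable_withDensity_iff (Measure.measurable_rnDeriv πm ρ)
      (Measure.rnDeriv_lt_top πm ρ)).mp hΦint'
  have hh_int : Integrable h ρ := Measure.integrable_toReal_rnDeriv
  have hpull : ρ[fun x => Φ x * h x | MeasurableSpace.comap proj inferInstance]
      =ᵐ[ρ] fun x => Φ x * F x := by
    have := condExp_mul_of_stronglyMeasurable_left hΦm (by exact hΦh_int) hh_int
    exact this
  have hΦF_int : Integrable (fun x => Φ x * F x) ρ := integrable_condExp.congr hpull
  have htower : ∫ x, Φ x * h x ∂ρ = ∫ x, Φ x * F x ∂ρ := by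
    rw [← integral_condExp hm (f := fun x => Φ x * h x)]
    exact integral_congr_ae hpull
  have hΦπ_eq : ∫ x, Φ x ∂πm = ∫ x, Φ x * h x ∂ρ := by
    rw [← integral_rnDeriv_smul hπρ]
    refine integral_congr_ae (ae_of_all _ fun x => ?_)
    simp only [smul_eq_mul, hhdef]
    ring
  -- integral over νs
  have hFnnmeas : AEMeasurable (fun x => (F x).toNNReal) ρ :=
    (hFmeas.real_toNNReal).aemeasurable
  have hcoe : (fun x => ((F x).toNNReal : ℝ≥0∞)) = fun x => ENNReal.ofReal (F x) := rfl
  have hΦνs_int : Integrable Φ νs := by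
    rw [hνs_dens, ← hcoe]
    refine (integrable_withDensity_iff_integrable_smul₀ hFnnmeas).mpr ?_
    refine hΦF_int.congr ?_
    filter_upwards [hFnonneg] with x hx
    simp only [NNReal.smul_def, Real.coe_toNNReal _ hx, smul_eq_mul]
    ring
  have hΦνs_eq : ∫ x, Φ x ∂νs = ∫ x, Φ x * F x ∂ρ := by
    rw [hνs_dens, ← hcoe, integral_withDensity_eq_integral_smul₀ hFnnmeas Φ]
    refine integral_congr_ae ?_
    filter_upwards [hFnonneg] with x hx
    simp only [NNReal.smul_def, Real.coe_toNNReal _ hx, smul_eq_mul]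
    ring
  have hI3 : ∫ x, Real.log ((νs.rnDeriv ν x).toReal) ∂νs = ∫ x, Φ x ∂νs :=
    integral_congr_ae hllr3
  have hint3 : Integrable (fun x => Real.log ((νs.rnDeriv ν x).toReal)) νs :=
    hΦνs_int.congr hllr3.symm
  -- kl values
  have hkl1 : klDiv πm ν
      = ENNReal.ofReal (∫ x, Real.log ((πm.rnDeriv ν x).toReal) ∂πm) := by
    rw [klDiv, if_pos ⟨hπν, hint1⟩]
  have hkl2 : klDiv πm νs
      = ENNReal.ofReal (∫ x, Real.log ((πm.rnDeriv νs x).toReal) ∂πm) := by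
    rw [klDiv, if_pos ⟨hπνs, hint2⟩]
  have hkl3 : klDiv νs ν
      = ENNReal.ofReal (∫ x, Real.log ((νs.rnDeriv ν x).toReal) ∂νs) := by
    rw [klDiv, if_pos ⟨hνsν, hint3⟩]
  have hg2 : 0 ≤ ∫ x, Real.log ((πm.rnDeriv νs x).toReal) ∂πm := gibbs_nonneg hπνs hint2
  have hg3 : 0 ≤ ∫ x, Real.log ((νs.rnDeriv ν x).toReal) ∂νs := gibbs_nonneg hνsν hint3
  have hfinal : ∫ x, Real.log ((πm.rnDeriv ν x).toReal) ∂πm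
      = ∫ x, Real.log ((πm.rnDeriv νs x).toReal) ∂πm
        + ∫ x, Real.log ((νs.rnDeriv ν x).toReal) ∂νs := by
    have hchain : ∫ x, Real.log ((νs.rnDeriv ν x).toReal) ∂νs
        = ∫ x, Real.log ((πm.rnDeriv ν x).toReal) ∂πm
          - ∫ x, Real.log ((πm.rnDeriv νs x).toReal) ∂πm := by
      rw [hI3, hΦνs_eq, ← htower, ← hΦπ_eq, ← hI12]
    linarith
  constructor
  · rw [hkl1, hkl2, hkl3, hfinal, ENNReal.ofReal_add hg2 hg3]
  · rw [hkl1, hkl2, hfinal, ENNReal.ofReal_add hg2 hg3]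
    exact le_self_add
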